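/- Let η : ℝ → ℝ be defined for 0 < r < π/2 by η(r) = c₁ · (1 − cos(r)^(2/3))^(1/2) · (cos(r)^(2/3) + cos(r)^(4/3) + 1)^(−1/4) · exp(−(√3/2) · arctan((2·cos(r)^(2/3) + 1)/√3)), where c₁ = 3^(3/4) · e^(π/(2√3)). Then as r → 0⁺ one has η'(r) − (1 + r²/2 + 13r⁴/72 + 1177r⁶/19440 + 7369r⁸/362880 + 681907r¹⁰/97977600) = O(r¹²). -/

import Mathlib

/-- The constant `c₁ = 3^(3/4) e^(π/(2√3))` of Lemma 2.4 of Gilkey–Park. -/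
noncomputable def c₁ : ℝ := (3 : ℝ) ^ ((3 : ℝ) / 4) * Real.exp (Real.pi / (2 * Real.sqrt 3))

/-- The reparametrized radial distance function `η` of Lemma 2.4 of Gilkey–Park on `CP²`. -/
noncomputable def η (r : ℝ) : ℝ :=
  c₁ * (1 - Real.cos r ^ ((2 : ℝ) / 3)) ^ ((1 : ℝ) / 2)
    * (Real.cos r ^ ((2 : ℝ) / 3) + Real.cos r ^ ((4 : ℝ) / 3) + 1) ^ (-(1 : ℝ) / 4)
    * Real.exp (-(Real.sqrt 3 / 2)
        * Real.arctan ((2 * Real.cos r ^ ((2 : ℝ) / 3) + 1) / Real.sqrt 3))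

namespace GP
open Real Set Filter Asymptotics

/-- `f` is approximated by `p` to order 12 near `0⁺`. -/
def Approx (f p : ℝ → ℝ) : Prop :=
  ∃ C δ : ℝ, 0 < δ ∧ ∀ r : ℝ, 0 < r → r ≤ δ → |f r - p r| ≤ C * r ^ 12

lemma Approx.trans {f g h : ℝ → ℝ} (h1 : Approx f g) (h2 : Approx g h) : Approx f h := by
  obtain ⟨C₁, δ₁, hδ₁, H₁⟩ := h1
  obtain ⟨C₂, δ₂, hδ₂, H₂⟩ := h2
  refine ⟨C₁ + C₂, min δ₁ δ₂, lt_min hδ₁ hδ₂, fun r hr hr' => ?_⟩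
  have e1 := H₁ r hr (hr'.trans (min_le_left _ _))
  have e2 := H₂ r hr (hr'.trans (min_le_right _ _))
  have : |f r - h r| ≤ |f r - g r| + |g r - h r| := abs_sub_le _ _ _
  nlinarith

lemma Approx.add {f g p q : ℝ → ℝ} (h1 : Approx f p) (h2 : Approx g q) :
    Approx (fun r => f r + g r) (fun r => p r + q r) := by
  obtain ⟨C₁, δ₁, hδ₁, H₁⟩ := h1
  obtain ⟨C₂, δ₂, hδ₂, H₂⟩ := h2
  refine ⟨C₁ + C₂, min δ₁ δ₂, lt_min hδ₁ hδ₂, fun r hr hr' => ?_⟩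
  have e1 := H₁ r hr (hr'.trans (min_le_left _ _))
  have e2 := H₂ r hr (hr'.trans (min_le_right _ _))
  have : |f r + g r - (p r + q r)| ≤ |f r - p r| + |g r - q r| := by
    have : f r + g r - (p r + q r) = (f r - p r) + (g r - q r) := by ring
    rw [this]; exact abs_add_le _ _
  nlinarith

lemma Approx.const_mul {f p : ℝ → ℝ} (c : ℝ) (h : Approx f p) :
    Approx (fun r => c * f r) (fun r => c * p r) := by
  obtain ⟨C, δ, hδ, H⟩ := h
  refine ⟨|c| * C, δ, hδ, fun r hr hr' => ?_⟩
  have := H r hr hr'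
  calc |c * f r - c * p r| = |c| * |f r - p r| := by rw [← abs_mul]; ring_nf
    _ ≤ |c| * (C * r ^ 12) := by
        exact mul_le_mul_of_nonneg_left this (abs_nonneg c)
    _ = |c| * C * r ^ 12 := by ring

lemma bound_Icc {f : ℝ → ℝ} (hf : ContinuousOn f (Icc (0:ℝ) 1)) :
    ∃ M : ℝ, 0 ≤ M ∧ ∀ r : ℝ, 0 ≤ r → r ≤ 1 → |f r| ≤ M := by
  obtain ⟨C, hC⟩ := isCompact_Icc.exists_bound_of_continuousOn hf
  refine ⟨max C 0, le_max_right _ _, fun r hr hr' => ?_⟩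
  exact le_trans (hC r ⟨hr, hr'⟩) (le_max_left _ _)

lemma Approx.mul {f p g q : ℝ → ℝ} (h1 : Approx f p) (h2 : Approx g q)
    (hf : ContinuousOn f (Icc (0:ℝ) 1)) (hq : ContinuousOn q (Icc (0:ℝ) 1)) :
    Approx (fun r => f r * g r) (fun r => p r * q r) := by
  obtain ⟨C₁, δ₁, hδ₁, H₁⟩ := h1
  obtain ⟨C₂, δ₂, hδ₂, H₂⟩ := h2
  obtain ⟨Mf, hMf0, hMf⟩ := bound_Icc hf
  obtain ⟨Mq, hMq0, hMq⟩ := bound_Icc hq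
  refine ⟨Mf * C₂ + Mq * C₁, min 1 (min δ₁ δ₂), by positivity, fun r hr hr' => ?_⟩
  have hr1 : r ≤ 1 := hr'.trans (min_le_left _ _)
  have e1 := H₁ r hr ((hr'.trans (min_le_right _ _)).trans (min_le_left _ _))
  have e2 := H₂ r hr ((hr'.trans (min_le_right _ _)).trans (min_le_right _ _))
  have bf := hMf r hr.le hr1
  have bq := hMq r hr.le hr1
  have key : f r * g r - p r * q r = f r * (g r - q r) + q r * (f r - p r) := by ring
  rw [key]
  calc |f r * (g r - q r) + q r * (f r - p r)|
      ≤ |f r * (g r - q r)| + |q r * (f r - p r)| := abs_add_le _ _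
    _ = |f r| * |g r - q r| + |q r| * |f r - p r| := by rw [abs_mul, abs_mul]
    _ ≤ Mf * (C₂ * r ^ 12) + Mq * (C₁ * r ^ 12) := by
        have h12 : (0:ℝ) ≤ r ^ 12 := by positivity
        have h12 : (0:ℝ) ≤ r ^ 12 := by positivity
        have t1 : |f r| * |g r - q r| ≤ Mf * (C₂ * r ^ 12) :=
          mul_le_mul bf e2 (abs_nonneg _) hMf0
        have t2 : |q r| * |f r - p r| ≤ Mq * (C₁ * r ^ 12) :=
          mul_le_mul bq e1 (abs_nonneg _) hMq0
        linarith
    _ = (Mf * C₂ + Mq * C₁) * r ^ 12 := by ring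

/-- polynomial truncation: if `p - q = r^12 * j` with `j` continuous, then `Approx p q`. -/
lemma approx_junk {p q j : ℝ → ℝ} (hj : ContinuousOn j (Icc (0:ℝ) 1))
    (hpq : ∀ r, p r - q r = r ^ 12 * j r) : Approx p q := by
  obtain ⟨M, hM0, hM⟩ := bound_Icc hj
  refine ⟨M, 1, one_pos, fun r hr hr' => ?_⟩
  rw [hpq r, abs_mul, abs_of_nonneg (by positivity : (0:ℝ) ≤ r ^ 12)]
  calc r ^ 12 * |j r| ≤ r ^ 12 * M := by
        exact mul_le_mul_of_nonneg_left (hM r hr.le hr') (by positivity)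
    _ = M * r ^ 12 := by ring

lemma approx_refl (f : ℝ → ℝ) : Approx f f :=
  ⟨0, 1, one_pos, fun r hr hr' => by simp⟩

lemma Approx.congr_left {f g p : ℝ → ℝ} (h : Approx f p) (hfg : ∀ r, 0 < r → r ≤ 1 → f r = g r) :
    Approx g p := by
  obtain ⟨C, δ, hδ, H⟩ := h
  refine ⟨C, min δ 1, by positivity, fun r hr hr' => ?_⟩
  rw [← hfg r hr (hr'.trans (min_le_right _ _))]
  exact H r hr (hr'.trans (min_le_left _ _))

/-! ### cosine Taylor bound -/

lemma two_pow_le_fact (n : ℕ) : 2 ^ n ≤ (2 * (n + 6)).factorial := by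
  induction n with
  | zero => norm_num [Nat.factorial]
  | succ n ih =>
    have h1 : 2 * (n + 1 + 6) = (2 * (n + 6)) + 2 := by ring
    rw [h1]
    have h2 : ((2 * (n + 6)) + 2).factorial
        = ((2 * (n + 6)) + 2) * (((2 * (n + 6)) + 1) * (2 * (n + 6)).factorial) := by
      rw [Nat.factorial_succ, Nat.factorial_succ]
    rw [h2, pow_succ]
    have : 2 ^ n * 2 ≤ (2 * (n + 6)).factorial * 2 := Nat.mul_le_mul_right 2 ih
    refine this.trans ?_
    have h3 : 2 ≤ ((2 * (n + 6)) + 2) := by omega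
    have h4 : 1 ≤ ((2 * (n + 6)) + 1) := by omega
    calc (2 * (n + 6)).factorial * 2 = 2 * (1 * (2 * (n + 6)).factorial) := by ring
      _ ≤ ((2 * (n + 6)) + 2) * (((2 * (n + 6)) + 1) * (2 * (n + 6)).factorial) := by
          exact Nat.mul_le_mul h3 (Nat.mul_le_mul_right _ h4)

noncomputable def Ccos : ℝ → ℝ := fun r =>
  1 - r ^ 2 / 2 + r ^ 4 / 24 - r ^ 6 / 720 + r ^ 8 / 40320 - r ^ 10 / 3628800

lemma cos_taylor : ∀ r : ℝ, 0 < r → r ≤ 1 → |Real.cos r - Ccos r| ≤ 2 * r ^ 12 := by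
  intro r hr hr1
  set f : ℕ → ℝ := fun n => (-1) ^ n * r ^ (2 * n) / ((2 * n).factorial : ℝ) with hf
  have hsum : HasSum f (Real.cos r) := Real.hasSum_cos r
  have hS : ∑ i ∈ Finset.range 6, f i = Ccos r := by
    simp [hf, Finset.sum_range_succ, Ccos, Nat.factorial]
    ring
  have htail : HasSum (fun n => f (n + 6)) (Real.cos r - Ccos r) := by
    rw [hasSum_nat_add_iff 6, hS]
    simpa using hsum
  have hgeo : HasSum (fun n : ℕ => r ^ 12 * (1 / 2) ^ n) (r ^ 12 * 2) := by
    have := hasSum_geometric_of_lt_one (r := (1/2 : ℝ)) (by norm_num) (by norm_num)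
    norm_num at this
    exact this.mul_left _
  have hbound : ∀ n : ℕ, |f (n + 6)| ≤ r ^ 12 * (1 / 2) ^ n := by
    intro n
    have h1 : |f (n + 6)| = r ^ (2 * (n + 6)) / ((2 * (n + 6)).factorial : ℝ) := by
      rw [hf]
      rw [abs_div, abs_mul, abs_pow, abs_neg, abs_one, one_pow, one_mul,
        abs_pow, abs_of_pos hr, abs_of_pos (by positivity : (0:ℝ) < ((2 * (n + 6)).factorial : ℝ))]
    rw [h1]
    have h2 : r ^ (2 * (n + 6)) = r ^ 12 * r ^ (2 * n) := by
      rw [← pow_add]; ring_nf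
    have h3 : r ^ (2 * n) ≤ 1 := pow_le_one₀ hr.le hr1
    have h4 : ((2:ℝ)) ^ n ≤ ((2 * (n + 6)).factorial : ℝ) := by
      exact_mod_cast two_pow_le_fact n
    have h5 : (((2 * (n + 6)).factorial : ℝ))⁻¹ ≤ ((1:ℝ) / 2) ^ n := by
      have : ((1:ℝ)/2) ^ n = ((2:ℝ) ^ n)⁻¹ := by
        rw [one_div, inv_pow]
      rw [this]
      exact inv_anti₀ (by positivity) h4
    calc r ^ (2 * (n + 6)) / ((2 * (n + 6)).factorial : ℝ)
        = r ^ 12 * r ^ (2 * n) * (((2 * (n + 6)).factorial : ℝ))⁻¹ := by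
          rw [h2]; ring
      _ ≤ r ^ 12 * 1 * ((1:ℝ) / 2) ^ n := by
          have : (0:ℝ) ≤ r ^ 12 := by positivity
          have h6 : r ^ (2*n) * (((2 * (n + 6)).factorial : ℝ))⁻¹ ≤ 1 * ((1:ℝ)/2)^n := by
            apply mul_le_mul h3 h5 (by positivity) (by norm_num)
          nlinarith [h6]
      _ = r ^ 12 * (1 / 2) ^ n := by ring
  have hub : Real.cos r - Ccos r ≤ r ^ 12 * 2 :=
    hasSum_le (fun n => (le_abs_self _).trans (hbound n)) htail hgeo
  have hlb : -(Real.cos r - Ccos r) ≤ r ^ 12 * 2 := by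
    refine hasSum_le (fun n => ?_) htail.neg hgeo
    exact (neg_le_abs _).trans (hbound n)
  rw [abs_le]
  constructor <;> nlinarith

lemma approx_cos : Approx Real.cos Ccos := ⟨2, 1, one_pos, cos_taylor⟩


/-! ### binomial bound for `(1-x)^(1/3)` -/

noncomputable def Bpoly : ℝ → ℝ := fun x =>
  1 - x/3 - x^2/9 - 5*x^3/81 - 10*x^4/243 - 22*x^5/729

lemma hasDerivAt_G {x : ℝ} (hx : x < 1) :
    HasDerivAt (fun y : ℝ => (1 - y) ^ ((1:ℝ)/3))
      (-1 * ((1:ℝ)/3) * (1 - x) ^ ((1:ℝ)/3 - 1)) x := by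
  have h1 : HasDerivAt (fun y : ℝ => 1 - y) (-1 : ℝ) x := by
    simpa using (hasDerivAt_id x).const_sub 1
  exact h1.rpow_const (Or.inl (by linarith))

lemma binom_bound : ∀ x : ℝ, 0 ≤ x → x ≤ 1/2 →
    |(1 - x) ^ ((1:ℝ)/3) - Bpoly x| ≤ 2 * x ^ 6 := by
  intro x₀ hx0 hx12
  set G : ℝ → ℝ := fun y => (1 - y) ^ ((1:ℝ)/3) with hG
  set F : ℝ → ℝ := fun y => (G y - Bpoly y) / G y with hF
  have hGpos : ∀ y : ℝ, 0 ≤ y → y ≤ 1/2 → (1/2 : ℝ) ≤ G y := by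
    intro y h0 h12
    have h1 : ((1:ℝ)/2) ^ ((1:ℝ)/3) ≤ (1 - y) ^ ((1:ℝ)/3) :=
      Real.rpow_le_rpow (by norm_num) (by linarith) (by norm_num)
    have h2 : ((1:ℝ)/2 : ℝ) ≤ ((1:ℝ)/2) ^ ((1:ℝ)/3) := by
      have := Real.rpow_le_rpow_of_exponent_ge (x := (1/2:ℝ)) (by norm_num) (by norm_num)
        (by norm_num : (1:ℝ)/3 ≤ 1)
      rwa [Real.rpow_one] at this
    linarith
  have hGle : ∀ y : ℝ, 0 ≤ y → y ≤ 1/2 → G y ≤ 1 := by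
    intro y h0 h12
    exact Real.rpow_le_one (by linarith) (by linarith) (by norm_num)
  -- derivative of F on [0, 1/2]
  have hFd : ∀ y : ℝ, 0 ≤ y → y ≤ 1/2 →
      HasDerivAt F (-(308/729) * y^5 / (3 * (1 - y) * G y)) y := by
    intro y h0 h12
    have hy1 : y < 1 := by linarith
    have hGy : (0:ℝ) < G y := lt_of_lt_of_le (by norm_num) (hGpos y h0 h12)
    have hgd := hasDerivAt_G hy1
    have hBd : HasDerivAt Bpoly
        (-1/3 - 2*y/9 - 15*y^2/81 - 40*y^3/243 - 110*y^4/729) y := by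
      unfold Bpoly
      have h := (((((hasDerivAt_id y).const_mul ((1:ℝ)/3)).neg.const_add 1).sub
        ((hasDerivAt_pow 2 y).const_mul ((1:ℝ)/9))).sub
        ((hasDerivAt_pow 3 y).const_mul ((5:ℝ)/81))).sub
        ((hasDerivAt_pow 4 y).const_mul ((10:ℝ)/243))
      have h2 := h.sub ((hasDerivAt_pow 5 y).const_mul ((22:ℝ)/729))
      convert h2 using 1
      · rfl
      · rfl
      · funext z; simp only [id_eq, Pi.sub_apply, Pi.neg_apply]; push_cast; ring
      · push_cast; ring
    have hnum := hgd.sub hBd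
    have hdiv := hnum.div hgd hGy.ne'
    refine HasDerivAt.congr_deriv hdiv (Eq.symm ?_)
    simp only [Pi.sub_apply]
    have hrw : (1 - y) ^ ((1:ℝ)/3 - 1) = G y / (1 - y) := by
      rw [hG]
      rw [Real.rpow_sub (by linarith), Real.rpow_one]
    rw [hrw]
    have h1y : (1 - y) ≠ 0 := by linarith
    simp only [hF, hG, Bpoly]
    field_simp
    ring
  -- MVT on [0, x₀]
  have hconv : Convex ℝ (Icc (0:ℝ) x₀) := convex_Icc _ _
  have hbound : ∀ y ∈ Icc (0:ℝ) x₀, ‖-(308/729 : ℝ) * y^5 / (3 * (1 - y) * G y)‖ ≤ 2 * x₀^5 := by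
    intro y hy
    obtain ⟨h0, hx⟩ := hy
    have h12 : y ≤ 1/2 := le_trans hx hx12
    have hGy := hGpos y h0 h12
    have h1y : (1/2 : ℝ) ≤ 1 - y := by linarith
    have hy5 : y^5 ≤ x₀^5 := pow_le_pow_left₀ h0 hx 5
    have hden : (3:ℝ) * (1 - y) * G y ≥ 3 * (1/2) * (1/2) := by
      apply mul_le_mul (by linarith) hGy (by norm_num) (by linarith)
    rw [norm_eq_abs, abs_div, abs_mul, abs_neg]
    have hnum : |(308/729 : ℝ)| * |y^5| = (308/729) * y^5 := by
      rw [abs_of_nonneg (by norm_num : (0:ℝ) ≤ 308/729), abs_of_nonneg (by positivity)]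
    rw [hnum]
    have hdenpos : (0:ℝ) < 3 * (1 - y) * G y := by positivity
    rw [abs_of_pos hdenpos]
    rw [div_le_iff₀ hdenpos]
    nlinarith [pow_nonneg h0 5, pow_nonneg hx0 5]
  have hF0 : F 0 = 0 := by
    rw [hF, hG]
    simp [Bpoly]
  have hFin : ∀ y ∈ Icc (0:ℝ) x₀, HasDerivWithinAt F
      (-(308/729) * y^5 / (3 * (1 - y) * G y)) (Icc (0:ℝ) x₀) y := by
    intro y hy
    exact (hFd y hy.1 (le_trans hy.2 hx12)).hasDerivWithinAt
  have hmvt := hconv.norm_image_sub_le_of_norm_hasDerivWithin_le hFin hbound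
    (left_mem_Icc.mpr hx0) (right_mem_Icc.mpr hx0)
  rw [hF0, sub_zero, norm_eq_abs, norm_eq_abs, sub_zero, abs_of_nonneg hx0] at hmvt
  -- |F x₀| ≤ 2 x₀⁶ ⇒ |G - B| ≤ 2 x₀⁶
  have hGx : (0:ℝ) < G x₀ := lt_of_lt_of_le (by norm_num) (hGpos x₀ hx0 hx12)
  have hGx1 : G x₀ ≤ 1 := hGle x₀ hx0 hx12
  have key : (1 - x₀) ^ ((1:ℝ)/3) - Bpoly x₀ = F x₀ * G x₀ := by
    rw [hF]
    show ((1 - x₀) ^ ((1:ℝ)/3)) - Bpoly x₀ = (G x₀ - Bpoly x₀) / G x₀ * G x₀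
    rw [hG]
    field_simp
    exact (mul_div_cancel_left₀ _ hGx.ne').symm
  rw [key, abs_mul]
  calc |F x₀| * |G x₀| ≤ (2 * x₀^5 * x₀) * 1 := by
        apply mul_le_mul hmvt _ (abs_nonneg _) (by positivity)
        rw [abs_of_pos hGx]; exact hGx1
    _ = 2 * x₀^6 := by ring



lemma sqrt3_pos : (0:ℝ) < Real.sqrt 3 := Real.sqrt_pos.mpr (by norm_num)
lemma sq_sqrt3 : Real.sqrt 3 * Real.sqrt 3 = 3 := Real.mul_self_sqrt (by norm_num)

/-- The closed form for `η'`: `η' r = Kf ((cos r)^(1/3))`. -/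
noncomputable def Kf : ℝ → ℝ := fun t =>
  c₁ * t⁻¹ * (t ^ 4 + t ^ 2 + 1) ^ (-(3:ℝ)/4)
    * Real.exp (-(Real.sqrt 3 / 2) * Real.arctan ((2 * t ^ 2 + 1) / Real.sqrt 3))

lemma hasDerivAt_Kf {t : ℝ} (ht : 0 < t) :
    HasDerivAt Kf (-((2*t^2+1)^2 / (t * (t^4+t^2+1))) * Kf t) t := by
  have hq : HasDerivAt (fun t : ℝ => t ^ 4 + t ^ 2 + 1) (4 * t ^ 3 + 2 * t) t := by
    have := ((hasDerivAt_pow 4 t).add (hasDerivAt_pow 2 t)).add_const 1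
    refine this.congr_deriv ?_
    push_cast; ring
  have hqpos : (0:ℝ) < t ^ 4 + t ^ 2 + 1 := by positivity
  have h2 : HasDerivAt (fun t : ℝ => (t ^ 4 + t ^ 2 + 1) ^ (-(3:ℝ)/4))
      ((4 * t ^ 3 + 2 * t) * (-(3:ℝ)/4) * (t ^ 4 + t ^ 2 + 1) ^ (-(3:ℝ)/4 - 1)) t :=
    hq.rpow_const (Or.inl hqpos.ne')
  have hw : HasDerivAt (fun t : ℝ => (2 * t ^ 2 + 1) / Real.sqrt 3)
      ((4 * t) / Real.sqrt 3) t := by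
    have := (((hasDerivAt_pow 2 t).const_mul 2).add_const 1).div_const (Real.sqrt 3)
    refine this.congr_deriv ?_
    push_cast; ring
  have ha : HasDerivAt (fun t : ℝ => Real.arctan ((2 * t ^ 2 + 1) / Real.sqrt 3))
      (1 / (1 + ((2 * t ^ 2 + 1) / Real.sqrt 3) ^ 2) * ((4 * t) / Real.sqrt 3)) t := hw.arctan
  have he : HasDerivAt
      (fun t : ℝ => Real.exp (-(Real.sqrt 3 / 2) * Real.arctan ((2 * t ^ 2 + 1) / Real.sqrt 3)))
      (Real.exp (-(Real.sqrt 3 / 2) * Real.arctan ((2 * t ^ 2 + 1) / Real.sqrt 3))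
        * (-(Real.sqrt 3 / 2) * (1 / (1 + ((2 * t ^ 2 + 1) / Real.sqrt 3) ^ 2) * ((4 * t) / Real.sqrt 3)))) t := by
    have := (ha.const_mul (-(Real.sqrt 3 / 2))).exp
    convert this using 1
  have hinv : HasDerivAt (fun t : ℝ => t⁻¹) (-(t^2)⁻¹) t := by
    simpa using hasDerivAt_inv ht.ne'
  have hKd := ((hinv.const_mul c₁).mul h2).mul he
  refine HasDerivAt.congr_deriv hKd (Eq.symm ?_)
  simp only [Pi.mul_apply]
  unfold Kf
  set A := (t ^ 4 + t ^ 2 + 1) ^ (-(3:ℝ)/4) with hA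
  set Epx := Real.exp (-(Real.sqrt 3 / 2) * Real.arctan ((2 * t ^ 2 + 1) / Real.sqrt 3)) with hE
  have hrw : (t ^ 4 + t ^ 2 + 1) ^ (-(3:ℝ)/4 - 1) = A / (t ^ 4 + t ^ 2 + 1) := by
    rw [hA, Real.rpow_sub hqpos, Real.rpow_one]
  rw [hrw]
  have hwsq : 1 + ((2 * t ^ 2 + 1) / Real.sqrt 3) ^ 2 = (4 * (t^4+t^2+1)) / 3 := by
    rw [div_pow]
    have h3 : Real.sqrt 3 ^ 2 = 3 := by rw [sq, sq_sqrt3]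
    rw [h3]
    field_simp
    ring
  rw [hwsq]
  have ht' : t ≠ 0 := ht.ne'
  have hq' : (t ^ 4 + t ^ 2 + 1) ≠ 0 := hqpos.ne'
  have hs3 : Real.sqrt 3 ≠ 0 := sqrt3_pos.ne'
  field_simp
  ring

lemma Kf_one : Kf 1 = 1 := by
  unfold Kf
  have h1 : (1:ℝ) ^ 4 + 1 ^ 2 + 1 = 3 := by norm_num
  have harg : (2 * (1:ℝ) ^ 2 + 1) / Real.sqrt 3 = Real.sqrt 3 := by
    rw [div_eq_iff sqrt3_pos.ne', sq_sqrt3]; norm_num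
  rw [h1, harg]
  have harct : Real.arctan (Real.sqrt 3) = π / 3 := by
    rw [← Real.tan_pi_div_three]
    exact Real.arctan_tan (by linarith [Real.pi_pos]) (by linarith [Real.pi_pos])
  rw [harct]
  unfold c₁
  rw [inv_one, mul_one]
  have hexp : Real.exp (π / (2 * Real.sqrt 3)) * Real.exp (-(Real.sqrt 3 / 2) * (π / 3))
      = 1 := by
    rw [← Real.exp_add, ← Real.exp_zero]
    congr 1
    have : π / (2 * Real.sqrt 3) = Real.sqrt 3 * π / 6 := by
      rw [div_eq_iff (by positivity : (2:ℝ) * Real.sqrt 3 ≠ 0)]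
      linear_combination (-(π/3)) * sq_sqrt3
    rw [this]; ring
  have hpow : (3:ℝ) ^ ((3:ℝ)/4) * (3:ℝ) ^ (-(3:ℝ)/4) = 1 := by
    rw [← Real.rpow_add (by norm_num : (0:ℝ) < 3)]
    norm_num
  calc (3:ℝ) ^ ((3:ℝ)/4) * Real.exp (π / (2 * Real.sqrt 3)) * (3:ℝ) ^ (-(3:ℝ)/4)
        * Real.exp (-(Real.sqrt 3 / 2) * (π / 3))
      = ((3:ℝ) ^ ((3:ℝ)/4) * (3:ℝ) ^ (-(3:ℝ)/4))
        * (Real.exp (π / (2 * Real.sqrt 3)) * Real.exp (-(Real.sqrt 3 / 2) * (π / 3))) := by ring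
    _ = 1 := by rw [hexp, hpow, mul_one]

/-- degree-5 Taylor polynomial of `s ↦ Kf (1 - s)` at `0`. -/
noncomputable def Lk : ℝ → ℝ := fun s =>
  1 + 3*s + 5*s^2 + 52/9*s^3 + 59/12*s^4 + 193/60*s^5

lemma kappa_bound : ∃ C δ : ℝ, 0 ≤ C ∧ 0 < δ ∧ δ ≤ 1/2 ∧ ∀ s : ℝ, 0 ≤ s → s ≤ δ →
    |Kf (1 - s) - Lk s| ≤ C * s ^ 6 := by
  -- continuity of Kf at 1 gives a lower bound near 1
  have hcont : ContinuousAt Kf 1 := (hasDerivAt_Kf one_pos).continuousAt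
  rw [Metric.continuousAt_iff] at hcont
  obtain ⟨ε, hε, hball⟩ := hcont (1/2) (by norm_num)
  set δ : ℝ := min (1/2) (ε/2) with hδdef
  have hδpos : 0 < δ := by positivity
  have hδ12 : δ ≤ 1/2 := min_le_left _ _
  have hKnear : ∀ s : ℝ, 0 ≤ s → s ≤ δ → 1/2 < Kf (1 - s) ∧ Kf (1 - s) < 3/2 := by
    intro s h0 hs
    have : dist (1 - s) 1 < ε := by
      rw [Real.dist_eq]
      have : s ≤ ε/2 := hs.trans (min_le_right _ _)
      rw [abs_of_nonpos (by linarith)]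
      linarith
    have := hball this
    rw [Real.dist_eq, Kf_one] at this
    rw [abs_lt] at this
    constructor <;> linarith [this.1, this.2]
  -- bound for the residual polynomial
  have hEt : ∃ Me : ℝ, 0 ≤ Me ∧ ∀ y : ℝ, 0 ≤ y → y ≤ 1 →
      |(-3373/90 : ℝ) + 14651/180*y - 23477/180*y^2 + 1851/20*y^3 - 579/20*y^4| ≤ Me :=
    bound_Icc (by fun_prop)
  obtain ⟨Me, hMe0, hMe⟩ := hEt
  refine ⟨6 * Me + 6, δ, by linarith, hδpos, hδ12, fun s₀ h0 hs₀ => ?_⟩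
  -- derivative of F = (Kf (1-s) - Lk s) / Kf (1-s) on [0, s₀]
  set F : ℝ → ℝ := fun s => (Kf (1 - s) - Lk s) / Kf (1 - s) with hF
  have hδlt1 : δ < 1 := lt_of_le_of_lt hδ12 (by norm_num)
  have hFd : ∀ y : ℝ, 0 ≤ y → y ≤ δ → HasDerivAt F
      (-(y^5 * ((-3373/90 : ℝ) + 14651/180*y - 23477/180*y^2 + 1851/20*y^3 - 579/20*y^4))
        / (((1-y)*((1-y)^4+(1-y)^2+1)) * Kf (1 - y))) y := by
    intro y hy0 hyδ
    have hty : (0:ℝ) < 1 - y := by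
      have := hyδ.trans hδ12; linarith
    have hKy : (0:ℝ) < Kf (1 - y) := lt_trans (by norm_num) (hKnear y hy0 hyδ).1
    have hkd : HasDerivAt (fun s : ℝ => Kf (1 - s))
        ((2*(1-y)^2+1)^2 / ((1-y) * ((1-y)^4+(1-y)^2+1)) * Kf (1 - y)) y := by
      have hinner : HasDerivAt (fun s : ℝ => 1 - s) (-1 : ℝ) y := by
        simpa using (hasDerivAt_id y).const_sub 1
      have := (hasDerivAt_Kf hty).comp y hinner
      refine this.congr_deriv ?_
      ring
    have hLd : HasDerivAt Lk (3 + 10*y + 52/3*y^2 + 59/3*y^3 + 193/12*y^4) y := by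
      unfold Lk
      have h := ((((hasDerivAt_id y).const_mul 3).const_add 1).add
        ((hasDerivAt_pow 2 y).const_mul 5)).add
        ((hasDerivAt_pow 3 y).const_mul (52/9))
      have h2 := (h.add ((hasDerivAt_pow 4 y).const_mul (59/12))).add
        ((hasDerivAt_pow 5 y).const_mul (193/60))
      convert h2 using 1
      · rfl
      · rfl
      all_goals
        first
          | (funext z; simp only [id_eq, Pi.add_apply] <;> ring)
          | (push_cast; ring)
    have hdiv := (hkd.sub hLd).div hkd hKy.ne'
    refine HasDerivAt.congr_deriv hdiv (Eq.symm ?_)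
    simp only [Pi.sub_apply]
    have hq4 : ((1-y)^4+(1-y)^2+1) ≠ 0 := by positivity
    simp only [Lk]
    field_simp
    ring
  -- MVT
  have hconv : Convex ℝ (Icc (0:ℝ) s₀) := convex_Icc _ _
  have hbound : ∀ y ∈ Icc (0:ℝ) s₀,
      ‖-(y^5 * ((-3373/90 : ℝ) + 14651/180*y - 23477/180*y^2 + 1851/20*y^3 - 579/20*y^4))
        / (((1-y)*((1-y)^4+(1-y)^2+1)) * Kf (1 - y))‖ ≤ (4 * Me + 4) * s₀^5 := by
    intro y hy
    obtain ⟨hy0, hys⟩ := hy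
    have hyδ : y ≤ δ := hys.trans hs₀
    have hty : (1/2:ℝ) ≤ 1 - y := by
      have := hyδ.trans hδ12; linarith
    have hKy := (hKnear y hy0 hyδ).1
    have hq1 : (1:ℝ) ≤ (1-y)^4+(1-y)^2+1 := by nlinarith
    have hprod : (1/2:ℝ) ≤ (1-y)*((1-y)^4+(1-y)^2+1) := by nlinarith
    have hden : (1/4:ℝ) ≤ ((1-y)*((1-y)^4+(1-y)^2+1)) * Kf (1 - y) := by
      calc (1/4:ℝ) = (1/2) * (1/2) := by norm_num
        _ ≤ ((1-y)*((1-y)^4+(1-y)^2+1)) * Kf (1 - y) :=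
            mul_le_mul hprod hKy.le (by norm_num) (by linarith)
    have hdenpos : (0:ℝ) < ((1-y)*((1-y)^4+(1-y)^2+1)) * Kf (1 - y) := by linarith
    rw [norm_eq_abs, abs_div, abs_neg, abs_mul, abs_of_pos hdenpos]
    have hy5 : |y^5| ≤ s₀^5 := by
      rw [abs_of_nonneg (by positivity)]
      exact pow_le_pow_left₀ hy0 hys 5
    have hEb : |(-3373/90 : ℝ) + 14651/180*y - 23477/180*y^2 + 1851/20*y^3 - 579/20*y^4| ≤ Me + 1 := by
      have h1 : y ≤ 1 := le_trans hyδ (by linarith)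
      exact (hMe y hy0 h1).trans (by linarith)
    calc |y^5| * |(-3373/90 : ℝ) + 14651/180*y - 23477/180*y^2 + 1851/20*y^3 - 579/20*y^4|
          / (((1-y)*((1-y)^4+(1-y)^2+1)) * Kf (1 - y))
        ≤ s₀^5 * (Me + 1) / (1/4) := by
          apply div_le_div₀ (by positivity) _ (by norm_num) hden
          exact mul_le_mul hy5 hEb (abs_nonneg _) (by positivity)
      _ = (4 * Me + 4) * s₀^5 := by ring
  have hF0 : F 0 = 0 := by
    rw [hF]
    simp [Kf_one, Lk]
  have hFin : ∀ y ∈ Icc (0:ℝ) s₀, HasDerivWithinAt F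
      (-(y^5 * ((-3373/90 : ℝ) + 14651/180*y - 23477/180*y^2 + 1851/20*y^3 - 579/20*y^4))
        / (((1-y)*((1-y)^4+(1-y)^2+1)) * Kf (1 - y))) (Icc (0:ℝ) s₀) y := by
    intro y hy
    exact (hFd y hy.1 (hy.2.trans hs₀)).hasDerivWithinAt
  have hmvt := hconv.norm_image_sub_le_of_norm_hasDerivWithin_le hFin hbound
    (left_mem_Icc.mpr h0) (right_mem_Icc.mpr h0)
  rw [hF0, sub_zero, norm_eq_abs, norm_eq_abs, sub_zero, abs_of_nonneg h0] at hmvt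
  have hKs := hKnear s₀ h0 hs₀
  have hKpos : (0:ℝ) < Kf (1 - s₀) := lt_trans (by norm_num) hKs.1
  have key : Kf (1 - s₀) - Lk s₀ = F s₀ * Kf (1 - s₀) := by
    rw [hF]; field_simp
  rw [key, abs_mul]
  calc |F s₀| * |Kf (1 - s₀)|
      ≤ ((4 * Me + 4) * s₀^5 * s₀) * (3/2) := by
        apply mul_le_mul hmvt _ (abs_nonneg _) (by positivity)
        rw [abs_of_pos hKpos]; linarith [hKs.2]
    _ ≤ (6 * Me + 6) * s₀^6 := by nlinarith [pow_nonneg h0 5]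



set_option maxHeartbeats 1000000 in
lemma eta_deriv {r : ℝ} (h0 : 0 < r) (h1 : r < π/2) :
    HasDerivAt η (Kf (Real.cos r ^ ((1:ℝ)/3))) r := by
  have hc : 0 < Real.cos r := Real.cos_pos_of_mem_Ioo ⟨by linarith, h1⟩
  have hs : 0 < Real.sin r := Real.sin_pos_of_pos_of_lt_pi h0 (by linarith [Real.pi_pos])
  have hc1 : Real.cos r < 1 := by
    nlinarith [Real.sin_sq r, hs, Real.cos_le_one r]
  set c := Real.cos r with hcdef
  -- basic atoms
  have hT : (0:ℝ) < c ^ ((1:ℝ)/3) := Real.rpow_pos_of_pos hc _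
  have hu : (0:ℝ) < c ^ ((2:ℝ)/3) := Real.rpow_pos_of_pos hc _
  have hu1 : c ^ ((2:ℝ)/3) < 1 := Real.rpow_lt_one hc.le hc1 (by norm_num)
  have hv : (0:ℝ) < c ^ ((4:ℝ)/3) := Real.rpow_pos_of_pos hc _
  -- derivative of u = c^(2/3) and v = c^(4/3)
  have hud : HasDerivAt (fun r => Real.cos r ^ ((2:ℝ)/3))
      (-Real.sin r * ((2:ℝ)/3) * c ^ ((2:ℝ)/3 - 1)) r :=
    (Real.hasDerivAt_cos r).rpow_const (Or.inl hc.ne')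
  have hvd : HasDerivAt (fun r => Real.cos r ^ ((4:ℝ)/3))
      (-Real.sin r * ((4:ℝ)/3) * c ^ ((4:ℝ)/3 - 1)) r :=
    (Real.hasDerivAt_cos r).rpow_const (Or.inl hc.ne')
  -- factor 1
  have h1u : (0:ℝ) < 1 - c ^ ((2:ℝ)/3) := by linarith
  have hf1 : HasDerivAt (fun r => (1 - Real.cos r ^ ((2:ℝ)/3)) ^ ((1:ℝ)/2))
      ((-(-Real.sin r * ((2:ℝ)/3) * c ^ ((2:ℝ)/3 - 1))) * ((1:ℝ)/2)
        * (1 - c ^ ((2:ℝ)/3)) ^ ((1:ℝ)/2 - 1)) r := by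
    have hin : HasDerivAt (fun r => 1 - Real.cos r ^ ((2:ℝ)/3))
        (-(-Real.sin r * ((2:ℝ)/3) * c ^ ((2:ℝ)/3 - 1))) r := hud.const_sub 1
    exact hin.rpow_const (Or.inl h1u.ne')
  -- factor 2
  have hQ : (0:ℝ) < c ^ ((2:ℝ)/3) + c ^ ((4:ℝ)/3) + 1 := by positivity
  have hf2 : HasDerivAt (fun r => (Real.cos r ^ ((2:ℝ)/3) + Real.cos r ^ ((4:ℝ)/3) + 1) ^ (-(1:ℝ)/4))
      ((-Real.sin r * ((2:ℝ)/3) * c ^ ((2:ℝ)/3 - 1) + -Real.sin r * ((4:ℝ)/3) * c ^ ((4:ℝ)/3 - 1))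
        * (-(1:ℝ)/4) * (c ^ ((2:ℝ)/3) + c ^ ((4:ℝ)/3) + 1) ^ (-(1:ℝ)/4 - 1)) r := by
    have hin : HasDerivAt (fun r => Real.cos r ^ ((2:ℝ)/3) + Real.cos r ^ ((4:ℝ)/3) + 1)
        (-Real.sin r * ((2:ℝ)/3) * c ^ ((2:ℝ)/3 - 1) + -Real.sin r * ((4:ℝ)/3) * c ^ ((4:ℝ)/3 - 1)) r :=
      (hud.add hvd).add_const 1
    exact hin.rpow_const (Or.inl hQ.ne')
  -- factor 3
  have hwd : HasDerivAt (fun r => (2 * Real.cos r ^ ((2:ℝ)/3) + 1) / Real.sqrt 3)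
      ((2 * (-Real.sin r * ((2:ℝ)/3) * c ^ ((2:ℝ)/3 - 1))) / Real.sqrt 3) r :=
    ((hud.const_mul 2).add_const 1).div_const _
  have hf3 : HasDerivAt
      (fun r => Real.exp (-(Real.sqrt 3 / 2) * Real.arctan ((2 * Real.cos r ^ ((2:ℝ)/3) + 1) / Real.sqrt 3)))
      (Real.exp (-(Real.sqrt 3 / 2) * Real.arctan ((2 * c ^ ((2:ℝ)/3) + 1) / Real.sqrt 3))
        * (-(Real.sqrt 3 / 2) * (1 / (1 + ((2 * c ^ ((2:ℝ)/3) + 1) / Real.sqrt 3) ^ 2)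
          * ((2 * (-Real.sin r * ((2:ℝ)/3) * c ^ ((2:ℝ)/3 - 1))) / Real.sqrt 3)))) r :=
    (hwd.arctan.const_mul (-(Real.sqrt 3 / 2))).exp
  -- simplified forms of the three factor derivatives
  set T := c ^ ((1:ℝ)/3) with hTdef
  set P1 := (1 - c ^ ((2:ℝ)/3)) ^ ((1:ℝ)/2) with hP1def
  set P2 := (c ^ ((2:ℝ)/3) + c ^ ((4:ℝ)/3) + 1) ^ (-(1:ℝ)/4) with hP2def
  set Epx := Real.exp (-(Real.sqrt 3 / 2) * Real.arctan ((2 * c ^ ((2:ℝ)/3) + 1) / Real.sqrt 3)) with hEdef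
  have hcT : c = T ^ 3 := by
    rw [hTdef, ← Real.rpow_natCast (c ^ ((1:ℝ)/3)) 3, ← Real.rpow_mul hc.le]
    norm_num
  have huT : c ^ ((2:ℝ)/3) = T ^ 2 := by
    rw [hTdef, ← Real.rpow_natCast (c ^ ((1:ℝ)/3)) 2, ← Real.rpow_mul hc.le]
    norm_num
  have hvT : c ^ ((4:ℝ)/3) = T ^ 4 := by
    rw [hTdef, ← Real.rpow_natCast (c ^ ((1:ℝ)/3)) 4, ← Real.rpow_mul hc.le]
    norm_num
  have hT : (0:ℝ) < T := Real.rpow_pos_of_pos hc _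
  have hT1 : T ^ 2 < 1 := by rw [← huT]; exact hu1
  have hQT : (0:ℝ) < T ^ 4 + T ^ 2 + 1 := by positivity
  have hP2pos : (0:ℝ) < P2 := Real.rpow_pos_of_pos hQ _
  have hP1pos : (0:ℝ) < P1 := Real.rpow_pos_of_pos h1u _
  have hTne : T ≠ 0 := hT.ne'
  have h1Tne : (1 - T ^ 2) ≠ 0 := by nlinarith
  have hQne : (T ^ 4 + T ^ 2 + 1) ≠ 0 := hQT.ne'
  have hs3 : Real.sqrt 3 ≠ 0 := sqrt3_pos.ne'
  -- exponent-shift rewrites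
  have r1 : c ^ ((2:ℝ)/3 - 1) = T ^ 2 / T ^ 3 := by
    rw [Real.rpow_sub hc, Real.rpow_one, huT, hcT]
  have r2 : c ^ ((4:ℝ)/3 - 1) = T ^ 4 / T ^ 3 := by
    rw [Real.rpow_sub hc, Real.rpow_one, hvT, hcT]
  have r3 : (1 - c ^ ((2:ℝ)/3)) ^ ((1:ℝ)/2 - 1) = P1 / (1 - T ^ 2) := by
    rw [Real.rpow_sub h1u, Real.rpow_one, hP1def, huT]
  have hQe : c ^ ((2:ℝ)/3) + c ^ ((4:ℝ)/3) + 1 = T ^ 4 + T ^ 2 + 1 := by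
    rw [huT, hvT]; ring
  have r4 : (c ^ ((2:ℝ)/3) + c ^ ((4:ℝ)/3) + 1) ^ (-(1:ℝ)/4 - 1) = P2 / (T ^ 4 + T ^ 2 + 1) := by
    rw [Real.rpow_sub hQ, Real.rpow_one, hP2def, huT, hvT]
    ring_nf
  have hP2_4 : P2 ^ 4 * (T ^ 4 + T ^ 2 + 1) = 1 := by
    have h4 : P2 ^ 4 = (c ^ ((2:ℝ)/3) + c ^ ((4:ℝ)/3) + 1)⁻¹ := by
      rw [hP2def, ← Real.rpow_natCast ((c ^ ((2:ℝ)/3) + c ^ ((4:ℝ)/3) + 1) ^ (-(1:ℝ)/4)) 4,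
        ← Real.rpow_mul hQ.le]
      norm_num [Real.rpow_neg_one]
    rw [h4, hQe]
    field_simp
  have hKf3 : (T ^ 4 + T ^ 2 + 1) ^ (-(3:ℝ)/4) = P2 ^ 3 := by
    rw [hP2def, ← Real.rpow_natCast ((c ^ ((2:ℝ)/3) + c ^ ((4:ℝ)/3) + 1) ^ (-(1:ℝ)/4)) 3,
      ← Real.rpow_mul hQ.le, ← hQe]
    norm_num
  have hC : Real.sin r ^ 2 = (1 - T ^ 2) * (T ^ 4 + T ^ 2 + 1) := by
    have h := Real.sin_sq r
    rw [← hcdef] at h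
    rw [h, hcT]
    ring
  have hP1eq : P1 = Real.sin r * P2 ^ 2 := by
    have e1 : P1 ^ 2 = 1 - T ^ 2 := by
      rw [hP1def, ← Real.rpow_natCast ((1 - c ^ ((2:ℝ)/3)) ^ ((1:ℝ)/2)) 2,
        ← Real.rpow_mul h1u.le]
      norm_num [Real.rpow_one]
      rw [huT]
    have hsq : P1 ^ 2 = (Real.sin r * P2 ^ 2) ^ 2 := by
      linear_combination e1 - P2 ^ 4 * hC - (1 - T ^ 2) * hP2_4
    have h1 : (0:ℝ) ≤ P1 := hP1pos.le
    have h2 : (0:ℝ) ≤ Real.sin r * P2 ^ 2 := by positivity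
    have h3 : Real.sqrt (P1 ^ 2) = Real.sqrt ((Real.sin r * P2 ^ 2) ^ 2) := by rw [hsq]
    rwa [Real.sqrt_sq h1, Real.sqrt_sq h2] at h3
  have hwsq : 1 + ((2 * c ^ ((2:ℝ)/3) + 1) / Real.sqrt 3) ^ 2
      = 4 * (T ^ 4 + T ^ 2 + 1) / 3 := by
    rw [div_pow]
    have h3 : Real.sqrt 3 ^ 2 = 3 := by rw [sq, sq_sqrt3]
    rw [h3, huT]
    field_simp
    ring
  -- simplified derivative values for the three factors
  have hf1' : HasDerivAt (fun r => (1 - Real.cos r ^ ((2:ℝ)/3)) ^ ((1:ℝ)/2))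
      ((1/3) * Real.sin r * (T ^ 2 / T ^ 3) * (P1 / (1 - T ^ 2))) r := by
    convert hf1 using 1
    rw [r1, r3]
    field_simp
  have hf2' : HasDerivAt (fun r => (Real.cos r ^ ((2:ℝ)/3) + Real.cos r ^ ((4:ℝ)/3) + 1) ^ (-(1:ℝ)/4))
      ((1/6) * Real.sin r * (1 + 2 * T ^ 2) * (T ^ 2 / T ^ 3) * (P2 / (T ^ 4 + T ^ 2 + 1))) r := by
    convert hf2 using 1
    rw [r1, r2, r4]
    field_simp
    ring
  have hf3' : HasDerivAt
      (fun r => Real.exp (-(Real.sqrt 3 / 2) * Real.arctan ((2 * Real.cos r ^ ((2:ℝ)/3) + 1) / Real.sqrt 3)))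
      (Epx * (Real.sin r * (T ^ 2 / T ^ 3) / (2 * (T ^ 4 + T ^ 2 + 1)))) r := by
    convert hf3 using 1
    rw [r1, hwsq]
    field_simp
    ring
  -- assemble
  have hηd := ((hf1'.const_mul c₁).mul hf2').mul hf3'
  have hη : η = fun r => c₁ * (1 - Real.cos r ^ ((2:ℝ)/3)) ^ ((1:ℝ)/2)
      * (Real.cos r ^ ((2:ℝ)/3) + Real.cos r ^ ((4:ℝ)/3) + 1) ^ (-(1:ℝ)/4)
      * Real.exp (-(Real.sqrt 3 / 2) * Real.arctan ((2 * Real.cos r ^ ((2:ℝ)/3) + 1) / Real.sqrt 3)) := by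
    funext x; rw [η]
  rw [hη]
  refine HasDerivAt.congr_deriv hηd (Eq.symm ?_)
  show Kf T = _
  unfold Kf
  rw [hKf3]
  have harg : (2 * T ^ 2 + 1) / Real.sqrt 3 = (2 * c ^ ((2:ℝ)/3) + 1) / Real.sqrt 3 := by
    rw [huT]
  rw [harg, ← hEdef, hP1eq]
  have hbr : (1/3)/(1-T^2) + (1/6)*(1+2*T^2)/(T^4+T^2+1) + 1/(2*(T^4+T^2+1))
      = 1/((1-T^2)*(T^4+T^2+1)) := by
    field_simp
    ring
  calc c₁ * T⁻¹ * P2 ^ 3 * Epx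
      = c₁ * Epx * P2 ^ 3 * Real.sin r ^ 2 * (T ^ 2 / T ^ 3)
        * (1/((1-T^2)*(T^4+T^2+1))) := by
        rw [hC]
        field_simp
    _ = c₁ * Epx * P2 ^ 3 * Real.sin r ^ 2 * (T ^ 2 / T ^ 3)
        * ((1/3)/(1-T^2) + (1/6)*(1+2*T^2)/(T^4+T^2+1) + 1/(2*(T^4+T^2+1))) := by
        rw [hbr]
    _ = c₁ * ((1/3) * Real.sin r * (T ^ 2 / T ^ 3) * (Real.sin r * P2 ^ 2 / (1 - T ^ 2))) * P2 * Epx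
        + c₁ * (Real.sin r * P2 ^ 2)
          * ((1/6) * Real.sin r * (1 + 2 * T ^ 2) * (T ^ 2 / T ^ 3) * (P2 / (T ^ 4 + T ^ 2 + 1))) * Epx
        + c₁ * (Real.sin r * P2 ^ 2) * P2
          * (Epx * (Real.sin r * (T ^ 2 / T ^ 3) / (2 * (T ^ 4 + T ^ 2 + 1)))) := by
        ring
    _ = (c₁ * ((1:ℝ)/3 * Real.sin r * (T ^ 2 / T ^ 3) * (Real.sin r * P2 ^ 2 / (1 - T ^ 2)))
            * (Real.cos r ^ ((2:ℝ)/3) + Real.cos r ^ ((4:ℝ)/3) + 1) ^ (-(1:ℝ)/4)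
          + c₁ * (1 - Real.cos r ^ ((2:ℝ)/3)) ^ ((1:ℝ)/2)
            * ((1:ℝ)/6 * Real.sin r * (1 + 2 * T ^ 2) * (T ^ 2 / T ^ 3) * (P2 / (T ^ 4 + T ^ 2 + 1)))) * Epx
        + c₁ * (1 - Real.cos r ^ ((2:ℝ)/3)) ^ ((1:ℝ)/2)
            * (Real.cos r ^ ((2:ℝ)/3) + Real.cos r ^ ((4:ℝ)/3) + 1) ^ (-(1:ℝ)/4)
            * (Epx * (Real.sin r * (T ^ 2 / T ^ 3) / (2 * (T ^ 4 + T ^ 2 + 1)))) := by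
        have hP1raw : (1 - Real.cos r ^ ((2:ℝ)/3)) ^ ((1:ℝ)/2) = Real.sin r * P2 ^ 2 := hP1eq
        have hP2raw : (Real.cos r ^ ((2:ℝ)/3) + Real.cos r ^ ((4:ℝ)/3) + 1) ^ (-(1:ℝ)/4) = P2 :=
          hP2def.symm
        rw [hP1raw, hP2raw]
        ring



lemma Approx.const_sub {f p : ℝ → ℝ} (c : ℝ) (h : Approx f p) :
    Approx (fun r => c - f r) (fun r => c - p r) := by
  obtain ⟨C, δ, hδ, H⟩ := h
  refine ⟨C, δ, hδ, fun r hr hr' => ?_⟩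
  have := H r hr hr'
  have e : c - f r - (c - p r) = -(f r - p r) := by ring
  rw [e, abs_neg]
  exact this

lemma Approx.congr_right {f p q : ℝ → ℝ} (h : Approx f p) (hpq : ∀ r, p r = q r) :
    Approx f q := by
  obtain ⟨C, δ, hδ, H⟩ := h
  exact ⟨C, δ, hδ, fun r hr hr' => by rw [← hpq r]; exact H r hr hr'⟩

noncomputable def PX1 : ℝ → ℝ := fun r => (1/2 : ℝ) * r ^ 2 + (-1/24 : ℝ) * r ^ 4 + (1/720 : ℝ) * r ^ 6 + (-1/40320 : ℝ) * r ^ 8 + (1/3628800 : ℝ) * r ^ 10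
noncomputable def PX2 : ℝ → ℝ := fun r => (1/4 : ℝ) * r ^ 4 + (-1/24 : ℝ) * r ^ 6 + (1/320 : ℝ) * r ^ 8 + (-17/120960 : ℝ) * r ^ 10
noncomputable def PJ2 : ℝ → ℝ := fun r => (31/7257600 : ℝ) + (-1/10886400 : ℝ) * r ^ 2 + (101/73156608000 : ℝ) * r ^ 4 + (-1/73156608000 : ℝ) * r ^ 6 + (1/13168189440000 : ℝ) * r ^ 8
noncomputable def PX3 : ℝ → ℝ := fun r => (1/8 : ℝ) * r ^ 6 + (-1/32 : ℝ) * r ^ 8 + (7/1920 : ℝ) * r ^ 10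
noncomputable def PJ3 : ℝ → ℝ := fun r => (-1/3780 : ℝ) + (41/3628800 : ℝ) * r ^ 2 + (-11/38707200 : ℝ) * r ^ 4 + (53/12192768000 : ℝ) * r ^ 6 + (-17/438939648000 : ℝ) * r ^ 8
noncomputable def PX4 : ℝ → ℝ := fun r => (1/16 : ℝ) * r ^ 8 + (-1/48 : ℝ) * r ^ 10
noncomputable def PJ4 : ℝ → ℝ := fun r => (19/5760 : ℝ) + (-1/5040 : ℝ) * r ^ 2 + (341/58060800 : ℝ) * r ^ 4 + (-23/232243200 : ℝ) * r ^ 6 + (1/995328000 : ℝ) * r ^ 8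
noncomputable def PX5 : ℝ → ℝ := fun r => (1/32 : ℝ) * r ^ 10
noncomputable def PJ5 : ℝ → ℝ := fun r => (-5/384 : ℝ) + (11/11520 : ℝ) * r ^ 2 + (-59/1935360 : ℝ) * r ^ 4 + (31/58060800 : ℝ) * r ^ 6 + (-1/174182400 : ℝ) * r ^ 8
noncomputable def PT : ℝ → ℝ := fun r => (1/1 : ℝ) + (-1/6 : ℝ) * r ^ 2 + (-1/72 : ℝ) * r ^ 4 + (-23/6480 : ℝ) * r ^ 6 + (-1069/1088640 : ℝ) * r ^ 8 + (-9643/32659200 : ℝ) * r ^ 10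
noncomputable def PS1 : ℝ → ℝ := fun r => (1/6 : ℝ) * r ^ 2 + (1/72 : ℝ) * r ^ 4 + (23/6480 : ℝ) * r ^ 6 + (1069/1088640 : ℝ) * r ^ 8 + (9643/32659200 : ℝ) * r ^ 10
noncomputable def PS2 : ℝ → ℝ := fun r => (1/36 : ℝ) * r ^ 4 + (1/216 : ℝ) * r ^ 6 + (107/77760 : ℝ) * r ^ 8 + (1391/3265920 : ℝ) * r ^ 10
noncomputable def PJS2 : ℝ → ℝ := fun r => (81299/587865600 : ℝ) + (13379/881798400 : ℝ) * r ^ 2 + (6044663/1975228416000 : ℝ) * r ^ 4 + (10308367/17777055744000 : ℝ) * r ^ 6 + (92987449/1066623344640000 : ℝ) * r ^ 8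
noncomputable def PS3 : ℝ → ℝ := fun r => (1/216 : ℝ) * r ^ 6 + (1/864 : ℝ) * r ^ 8 + (61/155520 : ℝ) * r ^ 10
noncomputable def PJS3 : ℝ → ℝ := fun r => (437/3265920 : ℝ) + (5191/220449600 : ℝ) * r ^ 2 + (17051/4031078400 : ℝ) * r ^ 4 + (2442917/2962842624000 : ℝ) * r ^ 6 + (13413413/106662334464000 : ℝ) * r ^ 8
noncomputable def PS4 : ℝ → ℝ := fun r => (1/1296 : ℝ) * r ^ 8 + (1/3888 : ℝ) * r ^ 10
noncomputable def PJS4 : ℝ → ℝ := fun r => (137/1399680 : ℝ) + (829/58786560 : ℝ) * r ^ 2 + (6107/1567641600 : ℝ) * r ^ 4 + (17581/24186470400 : ℝ) * r ^ 6 + (588223/5079158784000 : ℝ) * r ^ 8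
noncomputable def PS5 : ℝ → ℝ := fun r => (1/7776 : ℝ) * r ^ 10
noncomputable def PJS5 : ℝ → ℝ := fun r => (5/93312 : ℝ) + (53/8398080 : ℝ) * r ^ 2 + (2357/1410877440 : ℝ) * r ^ 4 + (20333/42326323200 : ℝ) * r ^ 6 + (9643/126978969600 : ℝ) * r ^ 8

noncomputable def xf : ℝ → ℝ := fun r => 1 - Real.cos r
noncomputable def x2f : ℝ → ℝ := fun r => xf r * xf r
noncomputable def x3f : ℝ → ℝ := fun r => xf r * x2f r
noncomputable def x4f : ℝ → ℝ := fun r => xf r * x3f r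
noncomputable def x5f : ℝ → ℝ := fun r => xf r * x4f r
noncomputable def tf : ℝ → ℝ := fun r => Real.cos r ^ ((1:ℝ)/3)
noncomputable def sf : ℝ → ℝ := fun r => 1 - tf r
noncomputable def s2f : ℝ → ℝ := fun r => sf r * sf r
noncomputable def s3f : ℝ → ℝ := fun r => sf r * s2f r
noncomputable def s4f : ℝ → ℝ := fun r => sf r * s3f r
noncomputable def s5f : ℝ → ℝ := fun r => sf r * s4f r
noncomputable def psif : ℝ → ℝ := fun r => Kf (Real.cos r ^ ((1:ℝ)/3))

lemma cont_xf : ContinuousOn xf (Icc (0:ℝ) 1) := by unfold xf; fun_prop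
lemma cont_sf : ContinuousOn sf (Icc (0:ℝ) 1) := by
  unfold sf tf
  apply (continuousOn_const).sub
  exact Real.continuous_cos.continuousOn.rpow_const (fun x _ => Or.inr (by norm_num))
lemma cont_PX1 : ContinuousOn PX1 (Icc (0:ℝ) 1) := by unfold PX1; fun_prop
lemma cont_PX2 : ContinuousOn PX2 (Icc (0:ℝ) 1) := by unfold PX2; fun_prop
lemma cont_PX3 : ContinuousOn PX3 (Icc (0:ℝ) 1) := by unfold PX3; fun_prop
lemma cont_PX4 : ContinuousOn PX4 (Icc (0:ℝ) 1) := by unfold PX4; fun_prop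
lemma cont_PJ2 : ContinuousOn PJ2 (Icc (0:ℝ) 1) := by unfold PJ2; fun_prop
lemma cont_PJ3 : ContinuousOn PJ3 (Icc (0:ℝ) 1) := by unfold PJ3; fun_prop
lemma cont_PJ4 : ContinuousOn PJ4 (Icc (0:ℝ) 1) := by unfold PJ4; fun_prop
lemma cont_PJ5 : ContinuousOn PJ5 (Icc (0:ℝ) 1) := by unfold PJ5; fun_prop
lemma cont_PS1 : ContinuousOn PS1 (Icc (0:ℝ) 1) := by unfold PS1; fun_prop
lemma cont_PS2 : ContinuousOn PS2 (Icc (0:ℝ) 1) := by unfold PS2; fun_prop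
lemma cont_PS3 : ContinuousOn PS3 (Icc (0:ℝ) 1) := by unfold PS3; fun_prop
lemma cont_PS4 : ContinuousOn PS4 (Icc (0:ℝ) 1) := by unfold PS4; fun_prop
lemma cont_PJS2 : ContinuousOn PJS2 (Icc (0:ℝ) 1) := by unfold PJS2; fun_prop
lemma cont_PJS3 : ContinuousOn PJS3 (Icc (0:ℝ) 1) := by unfold PJS3; fun_prop
lemma cont_PJS4 : ContinuousOn PJS4 (Icc (0:ℝ) 1) := by unfold PJS4; fun_prop
lemma cont_PJS5 : ContinuousOn PJS5 (Icc (0:ℝ) 1) := by unfold PJS5; fun_prop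



lemma x_bounds {r : ℝ} (h0 : 0 < r) (h12 : r ≤ 1/2) :
    0 ≤ xf r ∧ xf r ≤ r ^ 2 := by
  constructor
  · unfold xf; linarith [Real.cos_le_one r]
  · have habs := cos_taylor r h0 (by linarith)
    rw [abs_le] at habs
    have e1 : r^6 ≤ r^4 := pow_le_pow_of_le_one h0.le (by linarith) (by norm_num)
    have e2 : r^10 ≤ r^8 := pow_le_pow_of_le_one h0.le (by linarith) (by norm_num)
    have e3 : r^10 ≤ (1/2:ℝ)^10 := pow_le_pow_left₀ h0.le h12 10
    have e4 : r^2 * r^10 ≤ r^2 * (1/2:ℝ)^10 :=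
      mul_le_mul_of_nonneg_left e3 (by positivity)
    unfold xf
    unfold Ccos at habs
    nlinarith [habs.1, habs.2, sq_nonneg r, pow_nonneg h0.le 4, pow_nonneg h0.le 8]

lemma pi_half_gt_one : (1:ℝ) < π / 2 := by
  have := Real.pi_gt_three
  linarith

lemma s_bounds {r : ℝ} (h0 : 0 < r) (h12 : r ≤ 1/2) :
    0 ≤ sf r ∧ sf r ≤ r ^ 2 := by
  have hrpi : r < π/2 := lt_of_le_of_lt (by linarith) pi_half_gt_one
  have hc : 0 < Real.cos r := Real.cos_pos_of_mem_Ioo ⟨by linarith, hrpi⟩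
  have hc1 : Real.cos r ≤ 1 := Real.cos_le_one r
  constructor
  · unfold sf tf
    have : Real.cos r ^ ((1:ℝ)/3) ≤ 1 := Real.rpow_le_one hc.le hc1 (by norm_num)
    linarith
  · have hle : Real.cos r ≤ Real.cos r ^ ((1:ℝ)/3) := by
      have := Real.rpow_le_rpow_of_exponent_ge hc hc1 (by norm_num : (1:ℝ)/3 ≤ 1)
      rwa [Real.rpow_one] at this
    have := (x_bounds h0 h12).2
    unfold sf tf
    unfold xf at this
    linarith

lemma hx : Approx xf PX1 := by
  refine (approx_cos.const_sub 1).congr_right (fun r => ?_)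
  simp only [Ccos, PX1]
  ring

lemma hx2 : Approx x2f PX2 :=
  (hx.mul hx cont_xf cont_PX1).trans
    (approx_junk cont_PJ2 (fun r => by simp only [PX1, PX2, PJ2]; ring))

lemma hx3 : Approx x3f PX3 :=
  (hx.mul hx2 cont_xf cont_PX2).trans
    (approx_junk cont_PJ3 (fun r => by simp only [PX1, PX2, PX3, PJ3]; ring))

lemma hx4 : Approx x4f PX4 :=
  (hx.mul hx3 cont_xf cont_PX3).trans
    (approx_junk cont_PJ4 (fun r => by simp only [PX1, PX3, PX4, PJ4]; ring))

lemma hx5 : Approx x5f PX5 :=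
  (hx.mul hx4 cont_xf cont_PX4).trans
    (approx_junk cont_PJ5 (fun r => by simp only [PX1, PX4, PX5, PJ5]; ring))

noncomputable def btf : ℝ → ℝ := fun r =>
  1 + (-1/3:ℝ) * xf r + (-1/9:ℝ) * x2f r + (-5/81:ℝ) * x3f r
    + (-10/243:ℝ) * x4f r + (-22/729:ℝ) * x5f r

lemma hbt : Approx btf PT := by
  have h := ((((((approx_refl (fun _ => (1:ℝ))).add (hx.const_mul (-1/3))).add
    (hx2.const_mul (-1/9))).add (hx3.const_mul (-5/81))).add
    (hx4.const_mul (-10/243))).add (hx5.const_mul (-22/729)))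
  refine (h.congr_right (fun r => ?_))
  simp only [PX1, PX2, PX3, PX4, PX5, PT]
  ring

lemma htf : Approx tf btf := by
  refine ⟨2, 1/2, by norm_num, fun r h0 h12 => ?_⟩
  obtain ⟨hx0, hxr⟩ := x_bounds h0 h12
  have hr2 : r^2 ≤ 1/4 := by nlinarith
  have hb := binom_bound (xf r) hx0 (by linarith)
  have heq : tf r = (1 - xf r) ^ ((1:ℝ)/3) := by
    unfold tf xf; norm_num
  have heq2 : Bpoly (xf r) = btf r := by
    simp only [Bpoly, btf, x5f, x4f, x3f, x2f]
    ring
  rw [heq, ← heq2]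
  refine hb.trans ?_
  have : (xf r)^6 ≤ (r^2)^6 := pow_le_pow_left₀ hx0 hxr 6
  have e : (r^2)^6 = r^12 := by ring
  nlinarith [this]

lemma hT : Approx tf PT := htf.trans hbt

lemma hsf : Approx sf PS1 := by
  refine ((hT.const_sub 1).congr_right (fun r => ?_))
  simp only [PT, PS1]
  ring

lemma hs2 : Approx s2f PS2 :=
  (hsf.mul hsf cont_sf cont_PS1).trans
    (approx_junk cont_PJS2 (fun r => by simp only [PS1, PS2, PJS2]; ring))

lemma hs3 : Approx s3f PS3 :=
  (hsf.mul hs2 cont_sf cont_PS2).trans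
    (approx_junk cont_PJS3 (fun r => by simp only [PS1, PS2, PS3, PJS3]; ring))

lemma hs4 : Approx s4f PS4 :=
  (hsf.mul hs3 cont_sf cont_PS3).trans
    (approx_junk cont_PJS4 (fun r => by simp only [PS1, PS3, PS4, PJS4]; ring))

lemma hs5 : Approx s5f PS5 :=
  (hsf.mul hs4 cont_sf cont_PS4).trans
    (approx_junk cont_PJS5 (fun r => by simp only [PS1, PS4, PS5, PJS5]; ring))

noncomputable def lkf : ℝ → ℝ := fun r =>
  1 + (3:ℝ) * sf r + (5:ℝ) * s2f r + (52/9:ℝ) * s3f r + (59/12:ℝ) * s4f r + (193/60:ℝ) * s5f r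

noncomputable def Ptarget : ℝ → ℝ := fun r =>
  1 + r ^ 2 / 2 + 13 * r ^ 4 / 72 + 1177 * r ^ 6 / 19440
    + 7369 * r ^ 8 / 362880 + 681907 * r ^ 10 / 97977600

lemma hlk : Approx lkf Ptarget := by
  have h := ((((((approx_refl (fun _ => (1:ℝ))).add (hsf.const_mul 3)).add
    (hs2.const_mul 5)).add (hs3.const_mul (52/9))).add
    (hs4.const_mul (59/12))).add (hs5.const_mul (193/60)))
  refine h.congr_right (fun r => ?_)
  simp only [PS1, PS2, PS3, PS4, PS5, Ptarget]
  ring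

lemma hpsi : Approx psif lkf := by
  obtain ⟨C, δκ, hC0, hδκ, hδκ12, HK⟩ := kappa_bound
  refine ⟨C, min (1/2) (Real.sqrt δκ), lt_min (by norm_num) (Real.sqrt_pos.mpr hδκ), ?_⟩
  intro r h0 hr
  have h12 : r ≤ 1/2 := hr.trans (min_le_left _ _)
  obtain ⟨hs0, hsr⟩ := s_bounds h0 h12
  have hr2 : r ^ 2 ≤ δκ := by
    have h1 : r ≤ Real.sqrt δκ := hr.trans (min_le_right _ _)
    have h2 := Real.sq_sqrt hδκ.le
    nlinarith [Real.sqrt_nonneg δκ]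
  have hKb := HK (sf r) hs0 (hsr.trans hr2)
  have heqK : Kf (1 - sf r) = psif r := by
    have e : 1 - sf r = Real.cos r ^ ((1:ℝ)/3) := by unfold sf tf; ring
    rw [e]; rfl
  have heqL : Lk (sf r) = lkf r := by
    simp only [Lk, lkf, s5f, s4f, s3f, s2f]
    ring
  rw [heqK, heqL] at hKb
  refine hKb.trans ?_
  have h6 : (sf r)^6 ≤ (r^2)^6 := pow_le_pow_left₀ hs0 hsr 6
  have e : (r^2)^6 = r^12 := by ring
  nlinarith [h6, hC0]

lemma final_approx : Approx psif Ptarget := hpsi.trans hlk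

end GP

open Real Set Filter Asymptotics in
/-- The Taylor expansion of `ψ = η'` at the origin from the proof of Lemma 2.4:
`η'(r) = 1 + r²/2 + 13r⁴/72 + 1177r⁶/19440 + 7369r⁸/362880 + 681907r¹⁰/97977600 + O(r¹²)`
as `r → 0⁺`. -/
theorem stmt_12 :
    (fun r : ℝ => deriv η r -
        (1 + r ^ 2 / 2 + 13 * r ^ 4 / 72 + 1177 * r ^ 6 / 19440
          + 7369 * r ^ 8 / 362880 + 681907 * r ^ 10 / 97977600))
      =O[nhdsWithin 0 (Set.Ioi 0)] (fun r : ℝ => r ^ 12) := by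
  obtain ⟨C, δ, hδ, H⟩ := GP.final_approx
  rw [Asymptotics.isBigO_iff]
  refine ⟨C, ?_⟩
  have hmem : Set.Ioc (0:ℝ) (min δ 1) ∈ nhdsWithin (0:ℝ) (Set.Ioi 0) :=
    Ioc_mem_nhdsGT_of_mem ⟨le_refl 0, by positivity⟩
  filter_upwards [hmem] with r hr
  obtain ⟨h0, h1⟩ := hr
  have hr1 : r ≤ 1 := h1.trans (min_le_right _ _)
  have hrδ : r ≤ δ := h1.trans (min_le_left _ _)
  have hπ : r < Real.pi / 2 := lt_of_le_of_lt hr1 GP.pi_half_gt_one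
  have hderiv : deriv η r = GP.psif r := (GP.eta_deriv h0 hπ).deriv
  have hH := H r h0 hrδ
  rw [Real.norm_eq_abs, Real.norm_eq_abs, hderiv]
  have habs : |r ^ 12| = r ^ 12 := abs_of_pos (by positivity)
  rw [habs]
  exact hH
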